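/- Let F be a complex Hilbert space, X_1,…,X_N ∈ B(F), z, η_1,…,η_N ∈ F, and w ∈ ℂ, and suppose the block operator M : (⊕_{k=1}^N F) ⊕ ℂ → F ⊕ ℂ defined by M((f_k)_{k=1}^N, λ) = (Σ_{k=1}^N X_k f_k + λ z, Σ_{k=1}^N ⟨f_k, η_k⟩ + w λ) is a contraction (‖M‖ ≤ 1). Then there exists a (necessarily unique) structured upper triangular contraction T on ℓ²(F_N^+) whose first-row entries are T(∅,∅) = w and, for every nonempty word σ = i_1 i_2 ⋯ i_j, T(∅,σ) = ⟨X_{i_2} X_{i_3} ⋯ X_{i_j} z, η_{i_1}⟩ (interpreted as ⟨z, η_{i_1}⟩ when j = 1); in particular ‖T‖ ≤ 1. -/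

import Mathlib

open scoped ComplexOrder

noncomputable section

/-- Words over the alphabet `{1,…,N}`: the free monoid `F_N^+` (the empty list is `∅`). -/
abbrev Word (N : ℕ) := List (Fin N)

/-- The Hilbert space `ℓ²(F_N^+)`. -/
abbrev H2 (N : ℕ) : Type := lp (fun _ : Word N => ℂ) 2

/-- The canonical orthonormal basis vector `e_σ`. -/
def eb {N : ℕ} (σ : Word N) : H2 N := lp.single 2 σ 1

/-- The matrix entry `T(σ,τ) = ⟨T e_τ, e_σ⟩` (inner product linear in the first argument). -/
def entry {N : ℕ} (T : H2 N →L[ℂ] H2 N) (σ τ : Word N) : ℂ := (T (eb τ)) σ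

/-- `T` is structured upper triangular. -/
def IsSUT {N : ℕ} (T : H2 N →L[ℂ] H2 N) : Prop :=
  (∀ (a b : Fin N) (σ τ : Word N),
      entry T (a :: σ) (b :: τ) = if a = b then entry T σ τ else 0) ∧
  (∀ σ τ : Word N, τ.length < σ.length → entry T σ τ = 0)

namespace TAux

variable {N : ℕ} {F : Type*} [NormedAddCommGroup F] [InnerProductSpace ℂ F]

lemma eb_apply (σ' σ : Word N) : (eb σ' : ∀ _ : Word N, ℂ) σ = if σ = σ' then 1 else 0 := by
  by_cases h : σ = σ'
  · subst h; simp [eb, lp.single_apply_self]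
  · simp [eb, lp.single_apply_ne _ _ _ h, h]

lemma orthonormal_eb : Orthonormal ℂ (eb (N := N)) := by
  rw [orthonormal_iff_ite]
  intro i j
  rw [eb, lp.inner_single_left]
  simp [RCLike.inner_apply, eb_apply]

lemma single_eq_smul_eb (f : H2 N) (i : Word N) : lp.single 2 i (f i) = f i • eb i := by
  rw [eb, ← lp.single_smul]
  congr 1
  simp

lemma dense_span_eb :
    Dense (↑(Submodule.span ℂ (Set.range (eb (N := N)))) : Set (H2 N)) := by
  intro f
  have hf := lp.hasSum_single (E := fun _ : Word N => ℂ) ENNReal.ofNat_ne_top f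
  refine mem_closure_of_tendsto hf (Filter.Eventually.of_forall fun s => ?_)
  refine Submodule.sum_mem _ fun i _ => ?_
  rw [single_eq_smul_eb]
  exact Submodule.smul_mem _ _ (Submodule.subset_span ⟨i, rfl⟩)

lemma norm_sq_sum (a : Word N → ℂ) (s : Finset (Word N)) :
    ‖∑ σ ∈ s, a σ • eb (N := N) σ‖ ^ 2 = ∑ σ ∈ s, ‖a σ‖ ^ 2 := by
  have h1 := (orthonormal_eb (N := N)).inner_sum a a s
  have h2 : (‖∑ σ ∈ s, a σ • eb (N := N) σ‖ : ℝ) ^ 2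
      = RCLike.re (inner (𝕜 := ℂ) (∑ σ ∈ s, a σ • eb (N := N) σ) (∑ σ ∈ s, a σ • eb (N := N) σ)) := by
    rw [@norm_sq_eq_re_inner ℂ]
  rw [h2, h1, map_sum]
  refine Finset.sum_congr rfl fun σ _ => ?_
  rw [RCLike.conj_mul]
  simp [← Complex.ofReal_pow]

end TAux

namespace TAux

variable {N : ℕ} {F : Type*} [NormedAddCommGroup F] [InnerProductSpace ℂ F]

def Pvec (X : Fin N → F →L[ℂ] F) (z : F) (τ : Word N) : F := ((τ.map X).prod) z

lemma Pvec_nil (X : Fin N → F →L[ℂ] F) (z : F) : Pvec X z [] = z := by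
  simp [Pvec]

lemma Pvec_cons (X : Fin N → F →L[ℂ] F) (z : F) (k : Fin N) (τ : Word N) :
    Pvec X z (k :: τ) = X k (Pvec X z τ) := by
  simp [Pvec, List.prod_cons]

def coeff (X : Fin N → F →L[ℂ] F) (z : F) (η : Fin N → F) (w : ℂ) : Word N → ℂ
  | [] => w
  | i :: rest => (inner ℂ (η i) (Pvec X z rest) : ℂ)

def rowVec (X : Fin N → F →L[ℂ] F) (z : F) (η : Fin N → F) (w : ℂ) (τ : Word N) : H2 N :=
  ∑ σ ∈ τ.inits.toFinset, coeff X z η w (τ.drop σ.length) • eb σ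

lemma rowVec_apply (X : Fin N → F →L[ℂ] F) (z : F) (η : Fin N → F) (w : ℂ) (τ σ : Word N) :
    (rowVec X z η w τ : ∀ _ : Word N, ℂ) σ
      = if σ <+: τ then coeff X z η w (τ.drop σ.length) else 0 := by
  classical
  rw [rowVec, lp.coeFn_sum, Finset.sum_apply]
  have h : ∀ σ' ∈ τ.inits.toFinset,
      ((coeff X z η w (τ.drop σ'.length) • eb σ' : H2 N) : ∀ _ : Word N, ℂ) σ
        = if σ = σ' then coeff X z η w (τ.drop σ'.length) else 0 := by
    intro σ' _
    rw [lp.coeFn_smul, Pi.smul_apply, eb_apply]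
    simp [mul_ite]
  rw [Finset.sum_congr rfl h, Finset.sum_ite_eq]
  simp [List.mem_inits]

def hState (X : Fin N → F →L[ℂ] F) (z : F) (x : Word N →₀ ℂ) (σ : Word N) : F :=
  ∑ μ ∈ x.support, if σ <+: μ then x μ • Pvec X z (μ.drop σ.length) else 0

def yOut (X : Fin N → F →L[ℂ] F) (z : F) (η : Fin N → F) (w : ℂ) (x : Word N →₀ ℂ)
    (σ : Word N) : ℂ :=
  ∑ μ ∈ x.support, if σ <+: μ then x μ * coeff X z η w (μ.drop σ.length) else 0

lemma hState_rec (X : Fin N → F →L[ℂ] F) (z : F) (x : Word N →₀ ℂ) (σ : Word N) :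
    hState X z x σ = x σ • z + ∑ k, X k (hState X z x (σ ++ [k])) := by
  classical
  have key : ∀ μ ∈ x.support,
      (if σ <+: μ then x μ • Pvec X z (μ.drop σ.length) else 0)
        = (if μ = σ then x μ • z else 0)
          + ∑ k, X k (if (σ ++ [k]) <+: μ then x μ • Pvec X z (μ.drop (σ ++ [k]).length) else 0) := by
    intro μ _
    by_cases hpre : σ <+: μ
    · obtain ⟨ρ, rfl⟩ := hpre
      rw [if_pos (List.prefix_append σ ρ), List.drop_left]
      cases ρ with
      | nil =>
        have hk : ∀ k : Fin N, ¬ ((σ ++ [k]) <+: σ) := by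
          intro k hk
          have := hk.length_le
          simp at this
        simp [hk, Pvec_nil]
      | cons k₀ ρ' =>
        have hne : ¬ (σ ++ k₀ :: ρ' = σ) := by simp
        rw [if_neg hne, zero_add]
        have hterm : ∀ k : Fin N,
            X k (if (σ ++ [k]) <+: (σ ++ k₀ :: ρ') then
              x (σ ++ k₀ :: ρ') • Pvec X z ((σ ++ k₀ :: ρ').drop (σ ++ [k]).length) else 0)
            = if k₀ = k then X k (x (σ ++ k₀ :: ρ') • Pvec X z ρ') else 0 := by
          intro k
          by_cases hk : k₀ = k
          · subst hk
            rw [if_pos, if_pos rfl]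
            · congr 2
              have h1 : σ ++ k₀ :: ρ' = (σ ++ [k₀]) ++ ρ' := by simp
              rw [h1, List.drop_left]
            · exact (List.prefix_append_right_inj σ).mpr ⟨ρ', rfl⟩
          · rw [if_neg, map_zero, if_neg hk]
            intro hcon
            have h2 := (List.prefix_append_right_inj σ).mp hcon
            rw [List.cons_prefix_cons] at h2
            exact hk h2.1.symm
        rw [Finset.sum_congr rfl (fun k _ => hterm k), Finset.sum_ite_eq]
        simp [Pvec_cons]
    · rw [if_neg hpre]
      have h3 : ∀ k : Fin N, ¬ ((σ ++ [k]) <+: μ) := fun k hk =>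
        hpre ((List.prefix_append σ [k]).trans hk)
      have hμσ : ¬ (μ = σ) := fun e => hpre (e ▸ List.prefix_refl σ)
      simp [h3, hμσ]
  rw [hState, Finset.sum_congr rfl key, Finset.sum_add_distrib, Finset.sum_ite_eq' x.support σ]
  rw [Finset.sum_comm]
  congr 1
  · by_cases hσ : σ ∈ x.support
    · simp [hσ]
    · simp [hσ, Finsupp.notMem_support_iff.mp hσ]
  · refine Finset.sum_congr rfl fun k _ => ?_
    rw [← map_sum]
    rfl

lemma yOut_rec (X : Fin N → F →L[ℂ] F) (z : F) (η : Fin N → F) (w : ℂ) (x : Word N →₀ ℂ)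
    (σ : Word N) :
    yOut X z η w x σ = w * x σ + ∑ k, (inner ℂ (η k) (hState X z x (σ ++ [k])) : ℂ) := by
  classical
  have key : ∀ μ ∈ x.support,
      (if σ <+: μ then x μ * coeff X z η w (μ.drop σ.length) else 0)
        = (if μ = σ then w * x μ else 0)
          + ∑ k, (inner ℂ (η k)
              (if (σ ++ [k]) <+: μ then x μ • Pvec X z (μ.drop (σ ++ [k]).length) else 0) : ℂ) := by
    intro μ _
    by_cases hpre : σ <+: μ
    · obtain ⟨ρ, rfl⟩ := hpre
      rw [if_pos (List.prefix_append σ ρ), List.drop_left]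
      cases ρ with
      | nil =>
        have hk : ∀ k : Fin N, ¬ ((σ ++ [k]) <+: σ) := by
          intro k hk
          have := hk.length_le
          simp at this
        simp [hk, coeff, mul_comm]
      | cons k₀ ρ' =>
        have hne : ¬ (σ ++ k₀ :: ρ' = σ) := by simp
        rw [if_neg hne, zero_add]
        have hterm : ∀ k : Fin N,
            (inner ℂ (η k) (if (σ ++ [k]) <+: (σ ++ k₀ :: ρ') then
              x (σ ++ k₀ :: ρ') • Pvec X z ((σ ++ k₀ :: ρ').drop (σ ++ [k]).length) else 0) : ℂ)
            = if k₀ = k then (inner ℂ (η k) (x (σ ++ k₀ :: ρ') • Pvec X z ρ') : ℂ) else 0 := by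
          intro k
          by_cases hk : k₀ = k
          · subst hk
            rw [if_pos, if_pos rfl]
            · congr 3
              have h1 : σ ++ k₀ :: ρ' = (σ ++ [k₀]) ++ ρ' := by simp
              rw [h1, List.drop_left]
            · exact (List.prefix_append_right_inj σ).mpr ⟨ρ', rfl⟩
          · rw [if_neg, inner_zero_right, if_neg hk]
            intro hcon
            have h2 := (List.prefix_append_right_inj σ).mp hcon
            rw [List.cons_prefix_cons] at h2
            exact hk h2.1.symm
        rw [Finset.sum_congr rfl (fun k _ => hterm k), Finset.sum_ite_eq]
        simp [coeff, inner_smul_right, mul_comm]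
    · rw [if_neg hpre]
      have h3 : ∀ k : Fin N, ¬ ((σ ++ [k]) <+: μ) := fun k hk =>
        hpre ((List.prefix_append σ [k]).trans hk)
      have hμσ : ¬ (μ = σ) := fun e => hpre (e ▸ List.prefix_refl σ)
      simp [h3, hμσ]
  rw [yOut, Finset.sum_congr rfl key, Finset.sum_add_distrib, Finset.sum_ite_eq' x.support σ]
  rw [Finset.sum_comm]
  congr 1
  · by_cases hσ : σ ∈ x.support
    · simp [hσ]
    · simp [hσ, Finsupp.notMem_support_iff.mp hσ]
  · refine Finset.sum_congr rfl fun k _ => ?_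
    rw [hState, ← inner_sum]

lemma hState_eq_zero (X : Fin N → F →L[ℂ] F) (z : F) (x : Word N →₀ ℂ) (σ : Word N)
    (hσ : σ ∉ x.support.biUnion (fun μ => μ.inits.toFinset)) : hState X z x σ = 0 := by
  apply Finset.sum_eq_zero
  intro μ hμ
  rw [if_neg]
  intro hpre
  exact hσ (Finset.mem_biUnion.mpr ⟨μ, hμ, List.mem_toFinset.mpr ((List.mem_inits _ _).mpr hpre)⟩)

lemma linComb_rowVec (X : Fin N → F →L[ℂ] F) (z : F) (η : Fin N → F) (w : ℂ)
    (x : Word N →₀ ℂ) :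
    Finsupp.linearCombination ℂ (rowVec X z η w) x
      = ∑ σ ∈ x.support.biUnion (fun μ => μ.inits.toFinset), yOut X z η w x σ • eb σ := by
  classical
  set S := x.support.biUnion (fun μ => μ.inits.toFinset) with hS
  rw [Finsupp.linearCombination_apply, Finsupp.sum]
  have h1 : ∀ τ ∈ x.support, x τ • rowVec X z η w τ
      = ∑ σ ∈ S, (if σ <+: τ then x τ * coeff X z η w (τ.drop σ.length) else 0) • eb σ := by
    intro τ hτ
    rw [rowVec, Finset.smul_sum]
    have hsub : τ.inits.toFinset ⊆ S :=
      fun σ hσ => Finset.mem_biUnion.mpr ⟨τ, hτ, hσ⟩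
    rw [Finset.sum_congr rfl (fun σ hσ => ?_), Finset.sum_subset hsub (fun σ _ hσ => ?_)]
    · rw [if_neg, zero_smul]
      intro hpre
      exact hσ (List.mem_toFinset.mpr ((List.mem_inits _ _).mpr hpre))
    · rw [if_pos ((List.mem_inits _ _).mp (List.mem_toFinset.mp hσ)), smul_smul]
  rw [Finset.sum_congr rfl h1, Finset.sum_comm]
  refine Finset.sum_congr rfl fun σ _ => ?_
  rw [yOut, Finset.sum_smul]

end TAux

namespace TAux

variable {N : ℕ} {F : Type*} [NormedAddCommGroup F] [InnerProductSpace ℂ F]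

lemma energy (X : Fin N → F →L[ℂ] F) (z : F) (η : Fin N → F) (w : ℂ)
    (M : WithLp 2 ((PiLp 2 fun _ : Fin N => F) × ℂ) →L[ℂ] WithLp 2 (F × ℂ))
    (hM : ∀ (f : Fin N → F) (lam : ℂ),
        M ((WithLp.equiv 2 _).symm ((WithLp.equiv 2 _).symm f, lam)) =
          (WithLp.equiv 2 _).symm
            (∑ k, X k (f k) + lam • z, (∑ k, (inner ℂ (η k) (f k) : ℂ)) + w * lam))
    (hMnorm : ‖M‖ ≤ 1) (x : Word N →₀ ℂ) (σ : Word N) :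
    ‖hState X z x σ‖ ^ 2 + ‖yOut X z η w x σ‖ ^ 2
      ≤ (∑ k, ‖hState X z x (σ ++ [k])‖ ^ 2) + ‖x σ‖ ^ 2 := by
  set v : WithLp 2 ((PiLp 2 fun _ : Fin N => F) × ℂ) :=
    (WithLp.equiv 2 _).symm ((WithLp.equiv 2 _).symm (fun k => hState X z x (σ ++ [k])), x σ)
    with hv
  have hMv : M v = (WithLp.equiv 2 _).symm (hState X z x σ, yOut X z η w x σ) := by
    rw [hv, hM (fun k => hState X z x (σ ++ [k])) (x σ)]
    congr 1
    refine Prod.ext ?_ ?_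
    · simp only
      rw [hState_rec X z x σ, add_comm]
    · simp only
      rw [yOut_rec X z η w x σ, add_comm]
  have hle : ‖M v‖ ≤ ‖v‖ :=
    (M.le_opNorm v).trans (mul_le_of_le_one_left (norm_nonneg v) hMnorm)
  have hsq : ‖M v‖ ^ 2 ≤ ‖v‖ ^ 2 := pow_le_pow_left₀ (norm_nonneg _) hle 2
  have hL : ‖M v‖ ^ 2 = ‖hState X z x σ‖ ^ 2 + ‖yOut X z η w x σ‖ ^ 2 := by
    rw [hMv, WithLp.prod_norm_sq_eq_of_L2]
    simp
  have hR : ‖v‖ ^ 2 = (∑ k, ‖hState X z x (σ ++ [k])‖ ^ 2) + ‖x σ‖ ^ 2 := by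
    rw [hv, WithLp.prod_norm_sq_eq_of_L2]
    simp only [WithLp.equiv_symm_apply, WithLp.toLp_fst, WithLp.toLp_snd]
    rw [PiLp.norm_sq_eq_of_L2]
  rw [hL, hR] at hsq
  exact hsq

lemma key_estimate (X : Fin N → F →L[ℂ] F) (z : F) (η : Fin N → F) (w : ℂ)
    (M : WithLp 2 ((PiLp 2 fun _ : Fin N => F) × ℂ) →L[ℂ] WithLp 2 (F × ℂ))
    (hM : ∀ (f : Fin N → F) (lam : ℂ),
        M ((WithLp.equiv 2 _).symm ((WithLp.equiv 2 _).symm f, lam)) =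
          (WithLp.equiv 2 _).symm
            (∑ k, X k (f k) + lam • z, (∑ k, (inner ℂ (η k) (f k) : ℂ)) + w * lam))
    (hMnorm : ‖M‖ ≤ 1) (x : Word N →₀ ℂ) :
    ‖Finsupp.linearCombination ℂ (rowVec X z η w) x‖ ≤
      ‖Finsupp.linearCombination ℂ (eb (N := N)) x‖ := by
  classical
  set S := x.support.biUnion (fun μ => μ.inits.toFinset) with hS
  have hsupS : x.support ⊆ S := fun μ hμ =>
    Finset.mem_biUnion.mpr ⟨μ, hμ, List.mem_toFinset.mpr ((List.mem_inits _ _).mpr (List.prefix_refl μ))⟩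
  -- telescoping
  have himg : (∑ σ ∈ S, ∑ k : Fin N, ‖hState X z x (σ ++ [k])‖ ^ 2)
      + ‖hState X z x []‖ ^ 2 ≤ ∑ σ ∈ S, ‖hState X z x σ‖ ^ 2 := by
    set g : Word N → ℝ := fun μ => ‖hState X z x μ‖ ^ 2 with hg
    set app : Word N × Fin N → Word N := fun p => p.1 ++ [p.2] with happ
    have hinj : ∀ p ∈ S ×ˢ (Finset.univ : Finset (Fin N)),
        ∀ q ∈ S ×ˢ (Finset.univ : Finset (Fin N)), app p = app q → p = q := by
      rintro ⟨σ, k⟩ - ⟨σ', k'⟩ - hpq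
      simp only [happ] at hpq
      have hlen : σ.length = σ'.length := by
        have := congrArg List.length hpq
        simpa using this
      obtain ⟨h1, h2⟩ := List.append_inj hpq hlen
      simp at h2
      exact Prod.ext h1 h2
    have h1 : ∑ σ ∈ S, ∑ k : Fin N, g (σ ++ [k])
        = ∑ μ ∈ (S ×ˢ (Finset.univ : Finset (Fin N))).image app, g μ := by
      rw [Finset.sum_image hinj, ← Finset.sum_product']
    have hnil : ([] : Word N) ∉ (S ×ˢ (Finset.univ : Finset (Fin N))).image app := by
      simp only [Finset.mem_image, happ]
      rintro ⟨⟨σ, k⟩, -, hk⟩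
      simpa using congrArg List.length hk
    have h2 : ∑ μ ∈ (S ×ˢ (Finset.univ : Finset (Fin N))).image app, g μ + g []
        = ∑ μ ∈ insert ([] : Word N) ((S ×ˢ (Finset.univ : Finset (Fin N))).image app), g μ := by
      rw [Finset.sum_insert hnil]; ring
    have h3 : ∑ μ ∈ insert ([] : Word N) ((S ×ˢ (Finset.univ : Finset (Fin N))).image app), g μ
        ≤ ∑ μ ∈ insert ([] : Word N) ((S ×ˢ (Finset.univ : Finset (Fin N))).image app) ∪ S, g μ :=
      Finset.sum_le_sum_of_subset_of_nonneg Finset.subset_union_left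
        (fun _ _ _ => pow_two_nonneg _)
    have h4 : ∑ μ ∈ insert ([] : Word N) ((S ×ˢ (Finset.univ : Finset (Fin N))).image app) ∪ S, g μ
        = ∑ μ ∈ S, g μ := by
      refine (Finset.sum_subset Finset.subset_union_right ?_).symm
      intro μ _ hμ
      rw [hg]
      simp only
      rw [hState_eq_zero X z x μ hμ]
      simp
    calc (∑ σ ∈ S, ∑ k : Fin N, g (σ ++ [k])) + g []
        = ∑ μ ∈ (S ×ˢ (Finset.univ : Finset (Fin N))).image app, g μ + g [] := by rw [h1]
      _ = _ := h2
      _ ≤ _ := h3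
      _ = ∑ μ ∈ S, g μ := h4
  have sum_step : ∑ σ ∈ S, (‖hState X z x σ‖ ^ 2 + ‖yOut X z η w x σ‖ ^ 2)
      ≤ ∑ σ ∈ S, ((∑ k, ‖hState X z x (σ ++ [k])‖ ^ 2) + ‖x σ‖ ^ 2) :=
    Finset.sum_le_sum fun σ _ => energy X z η w M hM hMnorm x σ
  rw [Finset.sum_add_distrib, Finset.sum_add_distrib] at sum_step
  have hxS : ∑ σ ∈ S, ‖x σ‖ ^ 2 = ∑ σ ∈ x.support, ‖x σ‖ ^ 2 := by
    refine (Finset.sum_subset hsupS ?_).symm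
    intro σ _ hσ
    rw [Finsupp.notMem_support_iff.mp hσ]
    simp
  have hmain : ∑ σ ∈ S, ‖yOut X z η w x σ‖ ^ 2 ≤ ∑ σ ∈ x.support, ‖x σ‖ ^ 2 := by
    have h0 : (0 : ℝ) ≤ ‖hState X z x []‖ ^ 2 := pow_two_nonneg _
    linarith
  have hLsq : ‖Finsupp.linearCombination ℂ (rowVec X z η w) x‖ ^ 2
      = ∑ σ ∈ S, ‖yOut X z η w x σ‖ ^ 2 := by
    rw [linComb_rowVec, norm_sq_sum]
  have hEsq : ‖Finsupp.linearCombination ℂ (eb (N := N)) x‖ ^ 2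
      = ∑ σ ∈ x.support, ‖x σ‖ ^ 2 := by
    rw [Finsupp.linearCombination_apply, Finsupp.sum, norm_sq_sum]
  have : ‖Finsupp.linearCombination ℂ (rowVec X z η w) x‖ ^ 2
      ≤ ‖Finsupp.linearCombination ℂ (eb (N := N)) x‖ ^ 2 := by
    rw [hLsq, hEsq]; exact hmain
  exact (pow_le_pow_iff_left₀ (norm_nonneg _) (norm_nonneg _) two_ne_zero).mp this

end TAux

set_option synthInstance.maxHeartbeats 800000

/-- If the block operator `M((f_k)_k, λ) = (∑ₖ X_k f_k + λ z,
∑ₖ ⟨f_k, η_k⟩ + w λ)` is a contraction, then there is a (necessarily unique) structured upper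
triangular contraction `T` on `ℓ²(F_N^+)` with `T(∅,∅) = w` and
`T(∅, i₁i₂⋯i_j) = ⟨X_{i₂}⋯X_{i_j} z, η_{i₁}⟩`. -/
theorem transfer_map_contraction {N : ℕ} (hN : 1 ≤ N)
    (F : Type*) [NormedAddCommGroup F] [InnerProductSpace ℂ F] [CompleteSpace F]
    (X : Fin N → F →L[ℂ] F) (z : F) (η : Fin N → F) (w : ℂ)
    (M : WithLp 2 ((PiLp 2 fun _ : Fin N => F) × ℂ) →L[ℂ] WithLp 2 (F × ℂ))
    (hM : ∀ (f : Fin N → F) (lam : ℂ),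
        M ((WithLp.equiv 2 _).symm ((WithLp.equiv 2 _).symm f, lam)) =
          (WithLp.equiv 2 _).symm
            (∑ k, X k (f k) + lam • z, (∑ k, (inner ℂ (η k) (f k) : ℂ)) + w * lam))
    (hMnorm : ‖M‖ ≤ 1) :
    ∃! T : H2 N →L[ℂ] H2 N,
      IsSUT T ∧ ‖T‖ ≤ 1 ∧ entry T [] [] = w ∧
        ∀ (i : Fin N) (rest : Word N),
          entry T [] (i :: rest) = (inner ℂ (η i) (((rest.map X).prod) z) : ℂ) := by
  classical
  -- construction of the operator
  have horth : Orthonormal ℂ (eb (N := N)) := TAux.orthonormal_eb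
  have hli := horth.linearIndependent
  set D : Submodule ℂ (H2 N) := Submodule.span ℂ (Set.range (eb (N := N))) with hD
  have hDdense : Dense (↑D : Set (H2 N)) := TAux.dense_span_eb
  set bD : Module.Basis (Word N) ℂ D := Module.Basis.span hli with hbD
  set T₀ : D →ₗ[ℂ] H2 N := bD.constr ℂ (TAux.rowVec X z η w) with hT₀def
  have hT₀ : ∀ d : D, ‖T₀ d‖ ≤ 1 * ‖d‖ := by
    intro d
    rw [one_mul]
    have h1 : T₀ d = Finsupp.linearCombination ℂ (TAux.rowVec X z η w) (bD.repr d) := by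
      rw [hT₀def, Module.Basis.constr_apply, Finsupp.linearCombination_apply]
    have h2 : (d : H2 N) = Finsupp.linearCombination ℂ (eb (N := N)) (bD.repr d) := by
      conv_lhs => rw [← bD.linearCombination_repr d]
      calc (↑((Finsupp.linearCombination ℂ ⇑bD) (bD.repr d)) : H2 N)
          = D.subtype ((Finsupp.linearCombination ℂ ⇑bD) (bD.repr d)) := rfl
        _ = (Finsupp.linearCombination ℂ (⇑D.subtype ∘ ⇑bD)) (bD.repr d) :=
            Finsupp.apply_linearCombination ℂ D.subtype _ _
        _ = (Finsupp.linearCombination ℂ (eb (N := N))) (bD.repr d) := by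
            have hfun : (⇑D.subtype ∘ ⇑bD) = eb (N := N) := by
              funext τ
              show ((bD τ : D) : H2 N) = eb τ
              rw [hbD]
              exact congrArg Subtype.val (Module.Basis.span_apply hli τ)
            rw [hfun]
    have h3 : ‖d‖ = ‖(d : H2 N)‖ := rfl
    rw [h1, h3, h2]
    exact TAux.key_estimate X z η w M hM hMnorm (bD.repr d)
  set T₀c : D →L[ℂ] H2 N := T₀.mkContinuous 1 hT₀ with hT₀c
  have huni : IsUniformInducing ⇑(D.subtypeL) :=
    isUniformEmbedding_subtype_val.isUniformInducing
  have hdr : DenseRange ⇑(D.subtypeL) := by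
    have h : Set.range ⇑(D.subtypeL) = (↑D : Set (H2 N)) := Subtype.range_coe
    unfold DenseRange
    rw [h]
    exact hDdense
  set T : H2 N →L[ℂ] H2 N := T₀c.extend D.subtypeL with hT
  have hText : ∀ d : D, T (d : H2 N) = T₀c d := fun d =>
    ContinuousLinearMap.extend_eq T₀c hdr huni d
  have hTeb : ∀ τ : Word N, T (eb τ) = TAux.rowVec X z η w τ := by
    intro τ
    have hmem : eb τ ∈ D := Submodule.subset_span ⟨τ, rfl⟩
    have h1 := hText ⟨eb τ, hmem⟩
    have h3 : (⟨eb τ, hmem⟩ : D) = bD τ := (Module.Basis.span_apply hli τ).symm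
    rw [h1, h3]
    show T₀ (bD τ) = _
    rw [hT₀def]
    exact bD.constr_basis ℂ _ τ
  have hentry : ∀ σ τ : Word N, entry T σ τ
      = if σ <+: τ then TAux.coeff X z η w (τ.drop σ.length) else 0 := by
    intro σ τ
    rw [entry, hTeb τ]
    exact TAux.rowVec_apply X z η w τ σ
  have hSUT : IsSUT T := by
    constructor
    · intro a b σ τ
      rw [hentry, hentry]
      by_cases hab : a = b
      · subst hab
        by_cases hpre : σ <+: τ
        · rw [if_pos ((List.cons_prefix_cons).mpr ⟨rfl, hpre⟩), if_pos rfl, if_pos hpre]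
          congr 1
        · rw [if_neg, if_pos rfl, if_neg hpre]
          intro hcon
          exact hpre ((List.cons_prefix_cons).mp hcon).2
      · rw [if_neg, if_neg hab]
        intro hcon
        exact hab ((List.cons_prefix_cons).mp hcon).1
    · intro σ τ hlen
      rw [hentry, if_neg]
      intro hpre
      exact absurd hpre.length_le (not_le.mpr hlen)
  have hnorm : ‖T‖ ≤ 1 := by
    refine T.opNorm_le_bound zero_le_one fun u => ?_
    rw [one_mul]
    have hclosed : IsClosed {u : H2 N | ‖T u‖ ≤ ‖u‖} :=
      isClosed_le (T.continuous.norm) continuous_norm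
    have hsub : (↑D : Set (H2 N)) ⊆ {u : H2 N | ‖T u‖ ≤ ‖u‖} := by
      intro u hu
      have h1 := hText ⟨u, hu⟩
      have h2 : ‖T₀c ⟨u, hu⟩‖ ≤ 1 * ‖(⟨u, hu⟩ : D)‖ := hT₀ _
      rw [one_mul] at h2
      exact Set.mem_setOf_eq ▸ (h1 ▸ h2)
    have := hclosed.closure_subset_iff.mpr hsub
    exact this (hDdense.closure_eq ▸ Set.mem_univ u)
  have hw0 : entry T [] [] = w := by
    rw [hentry]
    simp [TAux.coeff]
  have hrow : ∀ (i : Fin N) (rest : Word N),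
      entry T [] (i :: rest) = (inner ℂ (η i) (((rest.map X).prod) z) : ℂ) := by
    intro i rest
    rw [hentry, if_pos List.nil_prefix]
    simp [TAux.coeff, TAux.Pvec]
  refine ⟨T, ⟨hSUT, hnorm, hw0, hrow⟩, ?_⟩
  -- uniqueness
  rintro T' ⟨⟨hsut1, hsut2⟩, -, hw', hrow'⟩
  have hent' : ∀ σ τ : Word N, entry T' σ τ = entry T σ τ := by
    intro σ
    induction σ with
    | nil =>
      intro τ
      cases τ with
      | nil => rw [hw', hw0]
      | cons i rest => rw [hrow' i rest, hrow i rest]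
    | cons a σ' ih =>
      intro τ
      cases τ with
      | nil =>
        rw [hsut2 _ _ (by simp), hSUT.2 _ _ (by simp)]
      | cons b τ' =>
        rw [hsut1, hSUT.1, ih τ']
  have hebeq : ∀ τ : Word N, T' (eb τ) = T (eb τ) := by
    intro τ
    apply lp.ext
    funext σ
    exact hent' σ τ
  refine ContinuousLinearMap.ext_on (hD ▸ hDdense) ?_
  rintro u ⟨τ, rfl⟩
  exact hebeq τ
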